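/- For each h ∈ {g₁, g₂, g₁g₂} (acting diagonally on L), the coinvariant lattice L / span_ℤ{x − h·x : x ∈ L} is isomorphic as an abelian group to ℤ⁷ ⊕ ℤ/3. (This is the computation H₀(ℤ₃, R_i) ≅ ℤ⁷ ⊕ ℤ₃, independent of which of the three cyclic subgroups ℤ₃ ⊂ ℤ₃×ℤ₃ is used; it gives H₂(X̃/ℤ₃, ℤ) ≅ ℤ⁷ ⊕ ℤ₃.) -/

import Mathlib

open Matrix

/-- The generator `g₁` of the ℤ₃×ℤ₃ action on the degree-2 homology lattice of the
ℤ₃×ℤ₃-symmetric dP₉ surface, in the basis (σ, f, θ₁₁, θ₂₁, θ₃₁, θ₃₂, θ₄₁, θ₄₂, μ, ν). -/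
def g1mat : Matrix (Fin 10) (Fin 10) ℤ :=
  !![0,0,0,3,0,0,0,0,-1,-1;
     0,1,0,3,0,1,0,1,-1,-1;
     0,0,1,0,0,0,0,0,0,0;
     0,0,0,-2,0,0,0,0,1,0;
     0,0,0,-2,0,-1,0,0,1,1;
     0,0,0,-1,1,-1,0,0,0,1;
     0,0,0,-2,0,0,0,-1,1,1;
     0,0,0,-1,0,0,1,-1,0,0;
     1,0,0,-3,0,0,0,0,2,1;
     0,0,0,0,0,0,0,0,0,1]

/-- The generator `g₂` of the ℤ₃×ℤ₃ action. -/
def g2mat : Matrix (Fin 10) (Fin 10) ℤ :=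
  !![0,0,3,0,0,0,0,0,-1,-1;
     0,1,3,0,1,0,0,1,-1,-1;
     0,0,-2,0,0,0,0,0,0,1;
     0,0,0,1,0,0,0,0,0,0;
     0,0,-1,0,-1,1,0,0,1,0;
     0,0,-2,0,-1,0,0,0,1,1;
     0,0,-2,0,0,0,0,-1,1,1;
     0,0,-1,0,0,0,1,-1,0,0;
     0,0,0,0,0,0,0,0,1,0;
     1,0,-3,0,0,0,0,0,1,2]

/-- The fiber class `f`. -/
def fvec : Fin 10 → ℤ := ![0,1,0,0,0,0,0,0,0,0]

/-- The ambient rank-20 lattice ℤ¹⁰ ⊕ ℤ¹⁰. -/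
abbrev Wlat := (Fin 10 → ℤ) × (Fin 10 → ℤ)

/-- The linear form ℓ(x) = x₁ + x₉ + x₁₀. -/
def ell (x : Fin 10 → ℤ) : ℤ := x 0 + x 8 + x 9

/-- The diagonal action of a matrix `g` on ℤ¹⁰ ⊕ ℤ¹⁰. -/
def act (g : Matrix (Fin 10) (Fin 10) ℤ) (x : Wlat) : Wlat :=
  (g.mulVec x.1, g.mulVec x.2)

/-- The rank-19 lattice `L = {(a,b) : ℓ(a) = ℓ(b)}` realizing the curve
representation `R = H₂(X̃,ℤ)` of ℤ₃×ℤ₃ on the curve classes of the covering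
Calabi-Yau threefold `X̃`. -/
def Lsub : Submodule ℤ Wlat where
  carrier := {x | ell x.1 = ell x.2}
  add_mem' := by
    intro a b ha hb
    simp only [Set.mem_setOf_eq, ell, Prod.fst_add, Prod.snd_add, Pi.add_apply] at *
    omega
  zero_mem' := by simp [ell]
  smul_mem' := by
    intro c x hx
    simp only [Set.mem_setOf_eq, ell, Prod.smul_fst, Prod.smul_snd, Pi.smul_apply,
      smul_eq_mul] at *
    linear_combination c * hx

def P1 : Fin 7 → Wlat := ![(![0,3,0,1,1,1,1,1,0,0], ![0,0,0,0,0,0,0,0,0,0]),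
  (![0,0,0,0,0,0,0,0,0,0], ![0,3,0,1,1,1,1,1,0,0]),
  (![1,0,0,0,0,0,0,0,1,1], ![0,0,0,0,0,0,0,0,0,0]),
  (![0,0,1,0,0,0,0,0,0,0], ![0,0,0,0,0,0,0,0,0,0]),
  (![0,0,0,0,0,0,0,0,0,1], ![0,0,0,0,0,0,0,0,0,0]),
  (![0,0,0,0,0,0,0,0,0,0], ![0,0,1,0,0,0,0,0,0,0]),
  (![0,0,0,0,0,0,0,0,0,0], ![0,0,0,0,0,0,0,0,0,1])]

def cc1 : Wlat := (![0,-3,0,0,-3,0,0,0,-1,0], ![0,9,0,3,3,3,3,0,1,0])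

def vv1 : Fin 7 → Wlat := ![(![0,0,0,0,0,0,0,1,0,0], ![0,0,0,0,0,0,0,0,0,0]),
  (![0,0,0,0,0,0,0,0,0,0], ![0,0,0,0,0,0,0,1,0,0]),
  (![1,0,0,0,0,0,0,0,0,0], ![1,0,0,0,0,0,0,0,0,0]),
  (![0,0,1,0,0,0,0,0,0,0], ![0,0,0,0,0,0,0,0,0,0]),
  (![-1,0,0,0,0,0,0,0,0,1], ![0,0,0,0,0,0,0,0,0,0]),
  (![0,0,0,0,0,0,0,0,0,0], ![0,0,1,0,0,0,0,0,0,0]),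
  (![0,0,0,0,0,0,0,0,0,0], ![-1,0,0,0,0,0,0,0,0,1])]

def ww1 : Wlat := (![0,0,0,0,0,0,0,0,0,0], ![-1,0,0,0,0,0,0,0,1,0])

def uu1 : Wlat := (![0,0,0,0,0,0,0,0,0,0], ![-3,0,0,1,1,0,1,0,3,0])

def YA1 : Matrix (Fin 10) (Fin 10) ℤ :=
  !![0,-3,0,-1,-1,-1,0,0,-1,0;
     0,0,0,0,0,0,0,0,0,0;
     0,0,0,0,0,0,0,0,0,0;
     0,-1,0,0,-1,0,0,0,0,0;
     0,0,0,0,0,0,0,0,0,0;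
     0,2,0,1,1,1,0,0,0,0;
     0,2,0,1,0,1,1,0,0,0;
     0,0,0,0,0,0,0,0,0,0;
     0,-3,0,-1,-3,0,0,0,0,0;
     0,3,0,2,1,1,0,0,0,0]

def YB1 : Matrix (Fin 10) (Fin 10) ℤ :=
  !![0,0,0,0,0,0,0,0,0,0;
     0,0,0,0,0,0,0,0,0,0;
     0,0,0,0,0,0,0,0,0,0;
     0,0,0,0,0,0,0,0,0,0;
     0,0,0,0,0,0,0,0,0,0;
     0,0,0,0,0,0,0,0,0,0;
     0,0,0,0,0,0,0,0,0,0;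
     0,0,0,0,0,0,0,0,0,0;
     0,0,0,0,0,0,0,0,0,0;
     0,0,0,0,0,0,0,0,0,0]

def YC1 : Matrix (Fin 10) (Fin 10) ℤ :=
  !![0,-3,0,0,-3,0,0,0,-1,0;
     0,0,0,0,0,0,0,0,0,0;
     0,0,0,0,0,0,0,0,0,0;
     0,0,0,0,0,0,0,0,0,0;
     0,0,0,0,0,0,0,0,0,0;
     0,0,0,0,0,0,0,0,0,0;
     0,0,0,0,0,0,0,0,0,0;
     0,0,0,0,0,0,0,0,0,0;
     0,0,0,0,0,0,0,0,0,0;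
     0,0,0,0,0,0,0,0,0,0]

def YD1 : Matrix (Fin 10) (Fin 10) ℤ :=
  !![0,6,0,2,2,2,3,0,0,0;
     0,0,0,0,0,0,0,0,0,0;
     0,0,0,0,0,0,0,0,0,0;
     0,-3,0,-1,-1,-1,-1,0,0,0;
     0,-2,0,-1,0,-1,-1,0,0,0;
     0,2,0,1,1,1,0,0,0,0;
     0,0,0,0,0,0,0,0,0,0;
     0,0,0,0,0,0,0,0,0,0;
     0,-9,0,-4,-3,-3,-3,0,0,0;
     0,3,0,2,1,1,0,0,0,0]

def P2 : Fin 7 → Wlat := ![(![0,0,0,0,0,0,0,0,0,0], ![0,0,0,1,0,0,0,0,0,0]),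
  (![0,0,0,0,0,0,0,0,0,0], ![0,3,1,0,1,1,1,1,0,0]),
  (![1,0,0,0,0,0,0,0,1,1], ![0,0,0,0,0,0,0,0,0,0]),
  (![0,0,0,0,0,0,0,0,1,0], ![0,0,0,0,0,0,0,0,0,0]),
  (![0,0,0,1,0,0,0,0,0,0], ![0,0,0,0,0,0,0,0,0,0]),
  (![0,0,0,0,0,0,0,0,0,0], ![0,0,0,0,0,0,0,0,1,0]),
  (![0,3,1,0,1,1,1,1,0,0], ![0,0,0,0,0,0,0,0,0,0])]

def cc2 : Wlat := (![0,0,0,0,0,0,0,0,0,-1], ![0,9,3,0,3,3,3,0,0,1])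

def vv2 : Fin 7 → Wlat := ![(![0,0,0,0,0,0,0,0,0,0], ![0,0,0,1,0,0,0,0,0,0]),
  (![0,0,0,0,0,0,0,0,0,0], ![0,0,0,0,0,0,0,1,0,0]),
  (![1,0,0,0,0,0,0,0,0,0], ![1,0,0,0,0,0,0,0,0,0]),
  (![-1,0,0,0,0,0,0,0,1,0], ![0,0,0,0,0,0,0,0,0,0]),
  (![0,0,0,1,0,0,0,0,0,0], ![0,0,0,0,0,0,0,0,0,0]),
  (![0,0,0,0,0,0,0,0,0,0], ![-1,0,0,0,0,0,0,0,1,0]),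
  (![0,0,0,0,0,0,0,1,0,0], ![0,0,0,0,0,0,0,0,0,0])]

def ww2 : Wlat := (![0,0,0,0,0,0,0,0,0,0], ![-1,0,0,0,0,0,0,0,0,1])

def uu2 : Wlat := (![0,0,0,0,0,0,0,0,0,0], ![-3,0,1,0,0,1,1,0,0,3])

def YA2 : Matrix (Fin 10) (Fin 10) ℤ :=
  !![0,-3,-1,0,-1,-1,0,0,0,-1;
     0,0,0,0,0,0,0,0,0,0;
     0,0,0,0,0,0,0,0,0,0;
     0,0,0,0,0,0,0,0,0,0;
     0,2,1,0,1,1,0,0,0,0;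
     0,1,0,0,0,1,0,0,0,0;
     0,3,1,0,1,1,1,0,0,0;
     0,0,0,0,0,0,0,0,0,0;
     0,3,2,0,1,1,0,0,0,0;
     0,0,-1,0,0,0,0,0,0,0]

def YB2 : Matrix (Fin 10) (Fin 10) ℤ :=
  !![0,0,0,0,0,0,0,0,0,0;
     0,0,0,0,0,0,0,0,0,0;
     0,0,0,0,0,0,0,0,0,0;
     0,0,0,0,0,0,0,0,0,0;
     0,0,0,0,0,0,0,0,0,0;
     0,0,0,0,0,0,0,0,0,0;
     0,0,0,0,0,0,0,0,0,0;
     0,0,0,0,0,0,0,0,0,0;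
     0,0,0,0,0,0,0,0,0,0;
     0,0,0,0,0,0,0,0,0,0]

def YC2 : Matrix (Fin 10) (Fin 10) ℤ :=
  !![0,0,0,0,0,0,0,0,0,-1;
     0,0,0,0,0,0,0,0,0,0;
     0,0,0,0,0,0,0,0,0,0;
     0,0,0,0,0,0,0,0,0,0;
     0,0,0,0,0,0,0,0,0,0;
     0,0,0,0,0,0,0,0,0,0;
     0,0,0,0,0,0,0,0,0,0;
     0,0,0,0,0,0,0,0,0,0;
     0,0,0,0,0,0,0,0,0,0;
     0,0,0,0,0,0,0,0,0,0]

def YD2 : Matrix (Fin 10) (Fin 10) ℤ :=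
  !![0,6,2,0,2,2,3,0,0,0;
     0,0,0,0,0,0,0,0,0,0;
     0,-3,-1,0,-1,-1,-1,0,0,0;
     0,0,0,0,0,0,0,0,0,0;
     0,2,1,0,1,1,0,0,0,0;
     0,-2,-1,0,-1,0,-1,0,0,0;
     0,0,0,0,0,0,0,0,0,0;
     0,0,0,0,0,0,0,0,0,0;
     0,3,2,0,1,1,0,0,0,0;
     0,-9,-4,0,-3,-3,-3,0,0,0]

def P3 : Fin 7 → Wlat := ![(![0,3,1,1,1,1,1,1,0,0], ![0,0,0,0,0,0,0,0,0,0]),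
  (![0,0,0,0,0,0,0,0,0,0], ![0,3,1,1,1,1,1,1,0,0]),
  (![1,0,0,0,0,0,0,0,1,1], ![0,0,0,0,0,0,0,0,0,0]),
  (![0,0,0,0,-2,1,0,0,1,0], ![0,0,0,0,0,0,0,0,0,0]),
  (![0,0,0,0,1,-2,0,0,0,1], ![0,0,0,0,0,0,0,0,0,0]),
  (![0,0,0,0,0,0,0,0,0,0], ![0,0,0,0,-2,1,0,0,1,0]),
  (![0,0,0,0,0,0,0,0,0,0], ![0,0,0,0,1,-2,0,0,0,1])]

def cc3 : Wlat := (![0,0,0,0,-1,2,0,0,0,0], ![0,0,0,0,-2,1,0,0,0,0])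

def vv3 : Fin 7 → Wlat := ![(![0,0,0,0,0,0,0,1,0,0], ![0,0,0,0,0,0,0,0,0,0]),
  (![0,0,0,0,0,0,0,0,0,0], ![0,0,0,0,0,0,0,1,0,0]),
  (![1,0,0,0,0,0,0,0,0,0], ![1,0,0,0,0,0,0,0,0,0]),
  (![-1,0,0,0,0,0,0,0,1,0], ![0,0,0,0,0,0,0,0,0,0]),
  (![-1,0,0,0,0,0,0,0,0,1], ![0,0,0,0,0,0,0,0,0,0]),
  (![0,0,0,0,0,0,0,0,0,0], ![-1,0,0,0,0,0,0,0,1,0]),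
  (![0,0,0,0,0,0,0,0,0,0], ![-1,0,0,0,0,0,0,0,0,1])]

def ww3 : Wlat := (![0,0,0,0,0,0,0,0,0,0], ![-1,0,0,0,0,1,0,-1,-1,2])

def uu3 : Wlat := (![-3,0,1,1,0,0,3,1,3,3], ![-6,0,3,0,0,0,3,0,0,9])

def YA3 : Matrix (Fin 10) (Fin 10) ℤ :=
  !![0,0,1,1,-2,1,0,0,0,0;
     0,0,0,0,0,0,0,0,0,0;
     0,0,0,0,0,0,0,0,0,0;
     0,0,0,0,1,-1,0,0,0,0;
     0,0,0,0,0,0,0,0,0,0;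
     0,0,0,0,0,0,0,0,0,0;
     0,-1,-1,-1,1,-2,0,0,0,0;
     0,-2,-1,-1,0,-1,-1,0,0,0;
     0,0,0,-1,3,-3,0,0,0,0;
     0,0,-1,0,0,0,0,0,0,0]

def YB3 : Matrix (Fin 10) (Fin 10) ℤ :=
  !![0,0,0,0,0,0,0,0,0,0;
     0,0,0,0,0,0,0,0,0,0;
     0,0,0,0,0,0,0,0,0,0;
     0,0,0,0,0,0,0,0,0,0;
     0,0,0,0,0,0,0,0,0,0;
     0,0,0,0,0,0,0,0,0,0;
     0,0,0,0,0,0,0,0,0,0;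
     0,0,0,0,0,0,0,0,0,0;
     0,0,0,0,0,0,0,0,0,0;
     0,0,0,0,0,0,0,0,0,0]

def YC3 : Matrix (Fin 10) (Fin 10) ℤ :=
  !![0,0,0,0,-2,4,0,0,0,0;
     0,0,0,0,0,0,0,0,0,0;
     0,0,0,0,1,-2,0,0,0,0;
     0,0,0,0,0,0,0,0,0,0;
     0,0,0,0,0,0,0,0,0,0;
     0,0,0,0,0,0,0,0,0,0;
     0,0,0,0,1,-2,0,0,0,0;
     0,0,0,0,0,0,0,0,0,0;
     0,0,0,0,0,0,0,0,0,0;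
     0,0,0,0,3,-6,0,0,0,0]

def YD3 : Matrix (Fin 10) (Fin 10) ℤ :=
  !![0,0,1,1,-3,0,0,0,0,0;
     0,0,0,0,0,0,0,0,0,0;
     0,0,0,0,1,0,0,0,0,0;
     0,0,0,0,0,0,0,0,0,0;
     0,0,0,0,0,0,0,0,0,0;
     0,0,0,0,0,0,0,0,0,0;
     0,-1,-1,-1,0,0,0,0,0,0;
     0,-2,-1,-1,-1,0,-1,0,0,0;
     0,0,0,-1,0,0,0,0,0,0;
     0,0,-1,0,3,0,0,0,0,0]


/-! ### Auxiliary machinery -/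

section Aux

/-- An explicit spanning family of 19 vectors for `Lsub`. -/
def bvec : Fin 19 → Wlat := ![
  (Pi.single 1 1, 0), (Pi.single 2 1, 0), (Pi.single 3 1, 0), (Pi.single 4 1, 0),
  (Pi.single 5 1, 0), (Pi.single 6 1, 0), (Pi.single 7 1, 0),
  (0, Pi.single 1 1), (0, Pi.single 2 1), (0, Pi.single 3 1), (0, Pi.single 4 1),
  (0, Pi.single 5 1), (0, Pi.single 6 1), (0, Pi.single 7 1),
  (Pi.single 0 1, Pi.single 0 1),
  (Pi.single 8 1 - Pi.single 0 1, 0), (Pi.single 9 1 - Pi.single 0 1, 0),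
  (0, Pi.single 8 1 - Pi.single 0 1), (0, Pi.single 9 1 - Pi.single 0 1)]

set_option maxHeartbeats 2000000 in
lemma Lsub_le_span : Lsub ≤ Submodule.span ℤ (Set.range bvec) := by
  rintro ⟨a, b⟩ hx
  have hab : a 0 + a 8 + a 9 = b 0 + b 8 + b 9 := hx
  have hb : ∀ k, bvec k ∈ Submodule.span ℤ (Set.range bvec) :=
    fun k => Submodule.subset_span ⟨k, rfl⟩
  have hrepr : ((a, b) : Wlat) =
      a 1 • ((Pi.single 1 1, 0) : Wlat) + a 2 • ((Pi.single 2 1, 0) : Wlat) +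
      a 3 • ((Pi.single 3 1, 0) : Wlat) + a 4 • ((Pi.single 4 1, 0) : Wlat) +
      a 5 • ((Pi.single 5 1, 0) : Wlat) + a 6 • ((Pi.single 6 1, 0) : Wlat) +
      a 7 • ((Pi.single 7 1, 0) : Wlat) +
      b 1 • ((0, Pi.single 1 1) : Wlat) + b 2 • ((0, Pi.single 2 1) : Wlat) +
      b 3 • ((0, Pi.single 3 1) : Wlat) + b 4 • ((0, Pi.single 4 1) : Wlat) +
      b 5 • ((0, Pi.single 5 1) : Wlat) + b 6 • ((0, Pi.single 6 1) : Wlat) +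
      b 7 • ((0, Pi.single 7 1) : Wlat) +
      (a 0 + a 8 + a 9) • ((Pi.single 0 1, Pi.single 0 1) : Wlat) +
      a 8 • ((Pi.single 8 1 - Pi.single 0 1, 0) : Wlat) +
      a 9 • ((Pi.single 9 1 - Pi.single 0 1, 0) : Wlat) +
      b 8 • ((0, Pi.single 8 1 - Pi.single 0 1) : Wlat) +
      b 9 • ((0, Pi.single 9 1 - Pi.single 0 1) : Wlat) := by
    refine Prod.ext ?_ ?_ <;> funext i <;>
      simp only [Prod.fst_add, Prod.snd_add, Prod.smul_fst, Prod.smul_snd,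
        Pi.add_apply, Pi.smul_apply, Pi.sub_apply, Pi.zero_apply, smul_eq_mul,
        Pi.single_apply] <;>
      fin_cases i <;> simp <;> omega
  rw [hrepr]
  exact (Submodule.add_mem _ (Submodule.add_mem _ (Submodule.add_mem _ (Submodule.add_mem _ (Submodule.add_mem _ (Submodule.add_mem _ (Submodule.add_mem _ (Submodule.add_mem _ (Submodule.add_mem _ (Submodule.add_mem _ (Submodule.add_mem _ (Submodule.add_mem _ (Submodule.add_mem _ (Submodule.add_mem _ (Submodule.add_mem _ (Submodule.add_mem _ (Submodule.add_mem _ (Submodule.add_mem _ (Submodule.smul_mem _ _ (hb 0)) (Submodule.smul_mem _ _ (hb 1))) (Submodule.smul_mem _ _ (hb 2))) (Submodule.smul_mem _ _ (hb 3))) (Submodule.smul_mem _ _ (hb 4))) (Submodule.smul_mem _ _ (hb 5))) (Submodule.smul_mem _ _ (hb 6))) (Submodule.smul_mem _ _ (hb 7))) (Submodule.smul_mem _ _ (hb 8))) (Submodule.smul_mem _ _ (hb 9))) (Submodule.smul_mem _ _ (hb 10))) (Submodule.smul_mem _ _ (hb 11))) (Submodule.smul_mem _ _ (hb 12))) (Submodule.smul_mem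 _ _ (hb 13))) (Submodule.smul_mem _ _ (hb 14))) (Submodule.smul_mem _ _ (hb 15))) (Submodule.smul_mem _ _ (hb 16))) (Submodule.smul_mem _ _ (hb 17))) (Submodule.smul_mem _ _ (hb 18)))

/-- The pairing used to define linear forms on `Wlat`. -/
def dotp (p x : Wlat) : ℤ := p.1 ⬝ᵥ x.1 + p.2 ⬝ᵥ x.2

/-- `dotp p` as a linear map. -/
def formL (p : Wlat) : Wlat →ₗ[ℤ] ℤ where
  toFun x := dotp p x
  map_add' x y := by
    show dotp p (x + y) = dotp p x + dotp p y
    simp only [dotp, Prod.fst_add, Prod.snd_add, dotProduct_add]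
    ring
  map_smul' c x := by
    show dotp p (c • x) = c * dotp p x
    simp only [dotp, Prod.smul_fst, Prod.smul_snd, dotProduct_smul, smul_eq_mul]
    ring

@[simp] lemma formL_apply (p x : Wlat) : formL p x = dotp p x := rfl

lemma dotp_sub (p x y : Wlat) : dotp p (x - y) = dotp p x - dotp p y :=
  map_sub (formL p) x y

/-- The raw four-block linear action on `Wlat`. -/
def Yfun (A B C D : Matrix (Fin 10) (Fin 10) ℤ) (x : Wlat) : Wlat :=
  (A.mulVec x.1 + B.mulVec x.2, C.mulVec x.1 + D.mulVec x.2)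

/-- `Yfun` as a linear map. -/
def YL (A B C D : Matrix (Fin 10) (Fin 10) ℤ) : Wlat →ₗ[ℤ] Wlat where
  toFun := Yfun A B C D
  map_add' x y := by
    simp only [Yfun, Prod.fst_add, Prod.snd_add, Matrix.mulVec_add, Prod.mk_add_mk,
      Prod.mk.injEq]
    constructor <;> abel
  map_smul' c x := by
    simp only [Yfun, Prod.smul_fst, Prod.smul_snd, Matrix.mulVec_smul, RingHom.id_apply,
      Prod.smul_mk, smul_add]

@[simp] lemma YL_apply (A B C D : Matrix (Fin 10) (Fin 10) ℤ) (x : Wlat) :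
    YL A B C D x = Yfun A B C D x := rfl

/-- The diagonal action as a linear map. -/
def actLin (g : Matrix (Fin 10) (Fin 10) ℤ) : Wlat →ₗ[ℤ] Wlat :=
  (Matrix.mulVecLin g).prodMap (Matrix.mulVecLin g)

@[simp] lemma actLin_apply (g : Matrix (Fin 10) (Fin 10) ℤ) (x : Wlat) :
    actLin g x = act g x := rfl

/-- A linear map vanishing on the spanning family vanishes on `Lsub`. -/
lemma vanish {M : Type*} [AddCommGroup M] [Module ℤ M] (f : Wlat →ₗ[ℤ] M)
    (hf : ∀ j, f (bvec j) = 0) : ∀ x ∈ Lsub, f x = 0 := by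
  intro x hx
  have h1 : Submodule.span ℤ (Set.range bvec) ≤ LinearMap.ker f := by
    rw [Submodule.span_le]
    rintro _ ⟨j, rfl⟩
    exact hf j
  exact h1 (Lsub_le_span hx)

/-- The integer-cast linear map to `ZMod 3`. -/
def cast3 : ℤ →ₗ[ℤ] ZMod 3 := (Int.castAddHom (ZMod 3)).toIntLinearMap

@[simp] lemma cast3_apply (n : ℤ) : cast3 n = (n : ZMod 3) := rfl

/-- The linear form computing `ell x.1 - ell x.2`. -/
def eWp : Wlat :=
  (Pi.single 0 1 + Pi.single 8 1 + Pi.single 9 1,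
   -(Pi.single 0 1 + Pi.single 8 1 + Pi.single 9 1))

lemma dotp_eWp (y : Wlat) : dotp eWp y = ell y.1 - ell y.2 := by
  simp only [dotp, eWp, add_dotProduct, neg_dotProduct, single_dotProduct,
    one_mul, ell]
  ring

set_option maxHeartbeats 1000000 in
/-- The main abstract lemma: certified Smith-normal-form data for `h` yields the
coinvariant computation. -/
lemma key (h : Matrix (Fin 10) (Fin 10) ℤ) (p : Fin 7 → Wlat) (cw : Wlat)
    (v : Fin 7 → Wlat) (w u : Wlat) (A B C D : Matrix (Fin 10) (Fin 10) ℤ)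
    (hv : ∀ i, ell (v i).1 = ell (v i).2)
    (hwL : ell w.1 = ell w.2) (huL : ell u.1 = ell u.2)
    (hYb : ∀ j, ell (Yfun A B C D (bvec j)).1 = ell (Yfun A B C D (bvec j)).2)
    (hPkill : ∀ i j, dotp (p i) (bvec j - act h (bvec j)) = 0)
    (hckill : ∀ j, ((dotp cw (bvec j - act h (bvec j)) : ℤ) : ZMod 3) = 0)
    (hA : ∀ j, bvec j - (∑ i, dotp (p i) (bvec j) • v i) - dotp cw (bvec j) • w
        = Yfun A B C D (bvec j) - act h (Yfun A B C D (bvec j)))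
    (h3w : (3 : ℤ) • w = u - act h u)
    (hPv : ∀ i i', dotp (p i) (v i') = if i' = i then 1 else 0)
    (hcv : ∀ i', ((dotp cw (v i') : ℤ) : ZMod 3) = 0)
    (hPw : ∀ i, dotp (p i) w = 0)
    (hcw : ((dotp cw w : ℤ) : ZMod 3) = 1) :
    Nonempty ((↥Lsub ⧸
        ((Submodule.span ℤ
          {y : Wlat | ∃ x : Wlat, ell x.1 = ell x.2 ∧ y = x - act h x}).comap
            Lsub.subtype))
      ≃ₗ[ℤ] ((Fin 7 → ℤ) × ZMod 3)) := by
  set G : Set Wlat := {y : Wlat | ∃ x : Wlat, ell x.1 = ell x.2 ∧ y = x - act h x} with hG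
  set S : Submodule ℤ ↥Lsub := (Submodule.span ℤ G).comap Lsub.subtype with hS
  -- extended identities
  have hPkill' : ∀ i, ∀ x ∈ Lsub, formL (p i) (x - act h x) = 0 := by
    intro i x hx
    exact vanish (formL (p i) - (formL (p i)).comp (actLin h))
      (fun j => by
        have := hPkill i j
        rw [dotp_sub] at this
        simpa [LinearMap.sub_apply, LinearMap.comp_apply] using this) x hx
      |>.trans rfl |> (fun hh => by
        rw [map_sub]
        simpa [LinearMap.sub_apply, LinearMap.comp_apply] using hh)
  have hckill' : ∀ x ∈ Lsub, ((dotp cw (x - act h x) : ℤ) : ZMod 3) = 0 := by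
    intro x hx
    have := vanish (cast3.comp ((formL cw) - (formL cw).comp (actLin h)))
      (fun j => by
        have := hckill j
        rw [dotp_sub, Int.cast_sub] at this
        simpa [LinearMap.sub_apply, LinearMap.comp_apply] using this) x hx
    rw [dotp_sub, Int.cast_sub]
    simpa [LinearMap.sub_apply, LinearMap.comp_apply] using this
  have hA' : ∀ x ∈ Lsub,
      x - (∑ i, dotp (p i) x • v i) - dotp cw x • w
        = Yfun A B C D x - act h (Yfun A B C D x) := by
    intro x hx
    have := vanish
      (LinearMap.id - (∑ i, (formL (p i)).smulRight (v i)) - (formL cw).smulRight w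
        - ((YL A B C D) - (actLin h).comp (YL A B C D)))
      (fun j => by
        simp only [LinearMap.sub_apply, LinearMap.id_apply, LinearMap.sum_apply,
          LinearMap.smulRight_apply, formL_apply, YL_apply, LinearMap.comp_apply,
          actLin_apply, sub_eq_zero]
        exact hA j) x hx
    simp only [LinearMap.sub_apply, LinearMap.id_apply, LinearMap.sum_apply,
      LinearMap.smulRight_apply, formL_apply, YL_apply, LinearMap.comp_apply,
      actLin_apply, sub_eq_zero] at this
    exact this
  have hYL' : ∀ x ∈ Lsub, Yfun A B C D x ∈ Lsub := by
    intro x hx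
    have := vanish ((formL eWp).comp (YL A B C D))
      (fun j => by
        simp only [LinearMap.comp_apply, YL_apply, formL_apply, dotp_eWp]
        rw [sub_eq_zero]
        exact hYb j) x hx
    simp only [LinearMap.comp_apply, YL_apply, formL_apply, dotp_eWp, sub_eq_zero] at this
    exact this
  -- the projection
  set πW : Wlat →ₗ[ℤ] (Fin 7 → ℤ) × ZMod 3 :=
    (LinearMap.pi (fun i => formL (p i))).prod (cast3.comp (formL cw)) with hπW
  have hGker : Submodule.span ℤ G ≤ LinearMap.ker πW := by
    rw [Submodule.span_le]
    rintro _ ⟨x, hx, rfl⟩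
    simp only [SetLike.mem_coe, LinearMap.mem_ker, hπW, LinearMap.prod_apply, Function.prod,
      LinearMap.pi_apply, LinearMap.comp_apply, formL_apply, cast3_apply, Prod.mk_eq_zero]
    constructor
    · funext i
      simpa using hPkill' i x hx
    · simpa using hckill' x hx
  have hSker : S ≤ LinearMap.ker (πW.comp Lsub.subtype) := by
    intro y hy
    simp only [LinearMap.mem_ker, LinearMap.comp_apply, Submodule.subtype_apply]
    exact hGker hy
  set πbar : (↥Lsub ⧸ S) →ₗ[ℤ] (Fin 7 → ℤ) × ZMod 3 :=
    S.liftQ (πW.comp Lsub.subtype) hSker with hπbar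
  -- the section
  set qv : Fin 7 → (↥Lsub ⧸ S) := fun i => S.mkQ ⟨v i, hv i⟩ with hqv
  set qw : (↥Lsub ⧸ S) := S.mkQ ⟨w, hwL⟩ with hqw
  have h3qw : (3 : ℤ) • qw = 0 := by
    have e1 : (3 : ℤ) • qw = S.mkQ ((3 : ℤ) • (⟨w, hwL⟩ : ↥Lsub)) :=
      (S.mkQ.map_smul _ _).symm
    rw [e1, Submodule.mkQ_apply, Submodule.Quotient.mk_eq_zero, hS, Submodule.mem_comap]
    have e2 : (Lsub.subtype) ((3 : ℤ) • (⟨w, hwL⟩ : ↥Lsub)) = u - act h u := by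
      simpa using h3w
    rw [e2]
    exact Submodule.subset_span ⟨u, huL, rfl⟩
  set σ1 : (Fin 7 → ℤ) →ₗ[ℤ] (↥Lsub ⧸ S) :=
    ∑ i, (LinearMap.proj i : (Fin 7 → ℤ) →ₗ[ℤ] ℤ).smulRight (qv i) with hσ1
  set σ2 : ZMod 3 →ₗ[ℤ] (↥Lsub ⧸ S) :=
    (ZMod.lift 3 ⟨(LinearMap.toSpanSingleton ℤ _ qw).toAddMonoidHom, by
      show (LinearMap.toSpanSingleton ℤ _ qw) (((3 : ℕ) : ℤ)) = 0
      rw [LinearMap.toSpanSingleton_apply]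
      exact_mod_cast h3qw⟩).toIntLinearMap with hσ2
  have hσ2int : ∀ k : ℤ, σ2 ((k : ℤ) : ZMod 3) = k • qw := by
    intro k
    rw [hσ2]
    simp only [AddMonoidHom.coe_toIntLinearMap]
    rw [ZMod.lift_coe]
    rfl
  set σ : ((Fin 7 → ℤ) × ZMod 3) →ₗ[ℤ] (↥Lsub ⧸ S) :=
    σ1.comp (LinearMap.fst ℤ _ _) + σ2.comp (LinearMap.snd ℤ _ _) with hσ
  -- computations of πbar on generators
  have hπqv : ∀ i, πbar (qv i) = (Pi.single i 1, 0) := by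
    intro i
    rw [hqv, hπbar]
    dsimp only
    rw [Submodule.mkQ_apply, Submodule.liftQ_apply]
    refine Prod.ext ?_ ?_
    · funext j
      simp only [LinearMap.comp_apply, Submodule.subtype_apply, hπW, LinearMap.prod_apply,
        Function.prod, LinearMap.pi_apply, formL_apply]
      rw [hPv j i, Pi.single_apply]
      simp [eq_comm]
    · simp only [LinearMap.comp_apply, Submodule.subtype_apply, hπW, LinearMap.prod_apply,
        Function.prod, cast3_apply, formL_apply]
      exact hcv i
  have hπqw : πbar qw = (0, 1) := by
    rw [hqw, hπbar, Submodule.mkQ_apply, Submodule.liftQ_apply]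
    refine Prod.ext ?_ ?_
    · funext j
      simp only [LinearMap.comp_apply, Submodule.subtype_apply, hπW, LinearMap.prod_apply,
        Function.prod, LinearMap.pi_apply, formL_apply]
      simpa using hPw j
    · simp only [LinearMap.comp_apply, Submodule.subtype_apply, hπW, LinearMap.prod_apply,
        Function.prod, cast3_apply, formL_apply]
      exact hcw
  refine ⟨LinearEquiv.ofLinear πbar σ ?_ ?_⟩
  · -- πbar ∘ σ = id
    apply LinearMap.ext
    rintro ⟨t, z⟩
    obtain ⟨k, rfl⟩ := ZMod.intCast_surjective z
    simp only [LinearMap.comp_apply, LinearMap.id_apply]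
    rw [hσ]
    simp only [LinearMap.add_apply, LinearMap.comp_apply, LinearMap.fst_apply,
      LinearMap.snd_apply]
    rw [hσ2int k, hσ1]
    simp only [LinearMap.sum_apply, LinearMap.smulRight_apply, LinearMap.proj_apply]
    rw [map_add, map_sum]
    simp only [LinearMap.map_smul, hπqv, hπqw]
    refine Prod.ext ?_ ?_
    · funext j
      simp only [Prod.fst_add, Prod.fst_sum, Prod.smul_fst, Finset.sum_apply,
        Pi.add_apply, Pi.smul_apply, Pi.single_apply, smul_eq_mul, mul_ite, mul_one,
        mul_zero, Pi.zero_apply]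
      rw [Finset.sum_ite_eq Finset.univ j t]
      simp
    · simp only [Prod.snd_add, Prod.snd_sum, Prod.smul_snd, Pi.zero_apply]
      simp [zsmul_eq_mul]
  · -- σ ∘ πbar = id
    apply LinearMap.ext
    intro q
    obtain ⟨y, rfl⟩ := S.mkQ_surjective q
    obtain ⟨x, hx⟩ := y
    have hπ : πbar (S.mkQ ⟨x, hx⟩)
        = (fun i => dotp (p i) x, ((dotp cw x : ℤ) : ZMod 3)) := by
      rw [hπbar, Submodule.mkQ_apply, Submodule.liftQ_apply]
      simp only [LinearMap.comp_apply, Submodule.subtype_apply, hπW, LinearMap.prod_apply,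
        Function.prod, LinearMap.pi_apply, formL_apply, cast3_apply]
      exact Prod.ext (funext fun i => rfl) rfl
    simp only [LinearMap.comp_apply, LinearMap.id_apply]
    rw [hπ, hσ]
    simp only [LinearMap.add_apply, LinearMap.comp_apply, LinearMap.fst_apply,
      LinearMap.snd_apply]
    rw [hσ2int (dotp cw x), hσ1]
    simp only [LinearMap.sum_apply, LinearMap.smulRight_apply, LinearMap.proj_apply]
    have hsum : (∑ i, dotp (p i) x • qv i) + dotp cw x • qw
        = S.mkQ ((∑ i, dotp (p i) x • (⟨v i, hv i⟩ : ↥Lsub))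
            + dotp cw x • (⟨w, hwL⟩ : ↥Lsub)) := by
      rw [map_add, map_sum]
      simp only [LinearMap.map_smul, hqv, hqw]
    rw [hsum, Submodule.mkQ_apply, Submodule.mkQ_apply, Submodule.Quotient.eq, hS,
      Submodule.mem_comap]
    have hcoe : (Lsub.subtype) (((∑ i, dotp (p i) x • (⟨v i, hv i⟩ : ↥Lsub))
            + dotp cw x • (⟨w, hwL⟩ : ↥Lsub)) - ⟨x, hx⟩)
        = -(x - (∑ i, dotp (p i) x • v i) - dotp cw x • w) := by
      rw [map_sub, map_add, map_sum]
      simp only [LinearMap.map_smul, Submodule.subtype_apply]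
      abel
    rw [hcoe, hA' x hx]
    exact Submodule.neg_mem _
      (Submodule.subset_span ⟨Yfun A B C D x, hYL' x hx, rfl⟩)

end Aux

set_option maxHeartbeats 4000000 in
/-- For each `h ∈ {g₁, g₂, g₁g₂}` (acting diagonally on `L`), the coinvariant lattice
`L / span_ℤ{x − h·x : x ∈ L}` is isomorphic as an abelian group to `ℤ⁷ ⊕ ℤ/3`.  This is
the computation `H₀(ℤ₃, R_i) ≅ ℤ⁷ ⊕ ℤ₃`, independent of which of the three cyclic
subgroups `ℤ₃ ⊂ ℤ₃×ℤ₃` is used; it gives `H₂(X̃/ℤ₃, ℤ) ≅ ℤ⁷ ⊕ ℤ₃`. -/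
theorem coinvariant_curve_lattice_cyclic :
    ∀ h ∈ ({g1mat, g2mat, g1mat * g2mat} : Set (Matrix (Fin 10) (Fin 10) ℤ)),
      Nonempty ((↥Lsub ⧸
          ((Submodule.span ℤ
            {y : Wlat | ∃ x : Wlat, ell x.1 = ell x.2 ∧ y = x - act h x}).comap
              Lsub.subtype))
        ≃ₗ[ℤ] ((Fin 7 → ℤ) × ZMod 3)) := by
  intro h hh
  simp only [Set.mem_insert_iff, Set.mem_singleton_iff] at hh
  rcases hh with rfl | rfl | rfl
  · exact key _ P1 cc1 vv1 ww1 uu1 YA1 YB1 YC1 YD1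
      (by decide) (by decide) (by decide) (by decide) (by decide) (by decide)
      (by decide) (by decide) (by decide) (by decide) (by decide) (by decide)
  · exact key _ P2 cc2 vv2 ww2 uu2 YA2 YB2 YC2 YD2
      (by decide) (by decide) (by decide) (by decide) (by decide) (by decide)
      (by decide) (by decide) (by decide) (by decide) (by decide) (by decide)
  · exact key _ P3 cc3 vv3 ww3 uu3 YA3 YB3 YC3 YD3
      (by decide) (by decide) (by decide) (by decide) (by decide) (by decide)
      (by decide) (by decide) (by decide) (by decide) (by decide) (by decide)
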